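/- Fix an integer D ≥ 0 and a function l assigning a real number l(u) to every binary string u of length at most D. Define MDL(u) for binary strings u with |u| ≤ D by reverse induction on |u|: MDL(u) = l(u) if |u| = D, and MDL(u) = 1 + min( l(u), MDL(0u) + MDL(1u) ) if |u| < D, where 0u and 1u denote prepending a bit to u. For a binary string u with |u| ≤ D, call a finite set T of binary strings a complete proper tree rooted at u if every t ∈ T has u as a suffix and |t| ≤ D, no element of T is a proper suffix of another element of T, and Σ_{t∈T} 2^{−(|t|−|u|)} = 1. Define cost(T) = Σ_{t∈T} l(t) + |{v : v has u as a suffix, |v| < D, and v ∈ T or v is a proper suffix of some element of T}|. Then for every binary string u with |u| ≤ D, MDL(u) equals the minimum of cost(T) over all complete proper trees T rooted at u. -/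
import Mathlib


/-- The context-tree-pruning recursion of Phase I of PTP-MDL:
`MDL u = l u` when `|u| = D`, and
`MDL u = 1 + min (l u) (MDL (0u) + MDL (1u))` when `|u| < D`. -/
noncomputable def mdlCost (D : ℕ) (l : List Bool → ℝ) (u : List Bool) : ℝ :=
  if D ≤ u.length then l u
  else 1 + min (l u) (mdlCost D l (false :: u) + mdlCost D l (true :: u))
termination_by D - u.length
decreasing_by
  · simp only [List.length_cons]; omega
  · simp only [List.length_cons]; omega

/-- `T` is a complete proper tree rooted at `u` with depth at most `D`:
every element of `T` has `u` as a suffix and length at most `D`, no element of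
`T` is a proper suffix of another element of `T`, and the Kraft sum relative
to the root `u` equals 1. -/
def IsCompleteProperTree (D : ℕ) (u : List Bool) (T : Finset (List Bool)) : Prop :=
  (∀ t ∈ T, u <:+ t ∧ t.length ≤ D) ∧
    (∀ t₁ ∈ T, ∀ t₂ ∈ T, t₁ ≠ t₂ → ¬ t₁ <:+ t₂) ∧
    ∑ t ∈ T, (2 : ℝ) ^ (-((t.length : ℤ) - (u.length : ℤ))) = 1

/-- The total description length of the tree `T` rooted at `u`: the sum of the
leaf coding lengths plus one bit for every node of depth less than `D` of the
tree (elements of `T` or proper suffixes of elements of `T` having `u` as a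
suffix). -/
noncomputable def treeCost (D : ℕ) (l : List Bool → ℝ) (u : List Bool)
    (T : Finset (List Bool)) : ℝ :=
  (∑ t ∈ T, l t) +
    ({v : List Bool | u <:+ v ∧ v.length < D ∧
        (v ∈ T ∨ ∃ t ∈ T, v ≠ t ∧ v <:+ t)}.ncard : ℝ)

namespace CTPAux

lemma suffix_eq_of_length {t s₁ s₂ : List Bool} (h₁ : s₁ <:+ t) (h₂ : s₂ <:+ t)
    (h : s₁.length = s₂.length) : s₁ = s₂ :=
  (List.suffix_of_suffix_length_le h₁ h₂ h.le).eq_of_length h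

lemma exists_cons_suffix {u t : List Bool} (h : u <:+ t) (hne : t ≠ u) :
    ∃ b, (b :: u) <:+ t := by
  obtain ⟨s, rfl⟩ := h
  have hs : s ≠ [] := by rintro rfl; simp at hne
  refine ⟨s.getLast hs, s.dropLast, ?_⟩
  show s.dropLast ++ (s.getLast hs :: u) = s ++ u
  rw [show s.getLast hs :: u = [s.getLast hs] ++ u from rfl, ← List.append_assoc,
    List.dropLast_append_getLast]

lemma kraft_half {u : List Bool} {S : Finset (List Bool)} (b : Bool)
    (h : ∀ t ∈ S, (b :: u) <:+ t) :
    ∑ t ∈ S, (2 : ℝ) ^ (-((t.length : ℤ) - (u.length : ℤ))) =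
      (∑ t ∈ S, (2 : ℝ) ^ (-((t.length : ℤ) - (((b :: u).length : ℕ) : ℤ)))) / 2 := by
  rw [Finset.sum_div]
  refine Finset.sum_congr rfl fun t ht => ?_
  rw [div_eq_mul_inv, ← zpow_neg_one, ← zpow_add₀ (two_ne_zero : (2 : ℝ) ≠ 0)]
  congr 1
  push_cast [List.length_cons]
  ring

lemma tree_split {u : List Bool} {T : Finset (List Bool)}
    (hT : ∀ t ∈ T, u <:+ t) (hu : u ∉ T) :
    T.filter (fun t => (false :: u) <:+ t) ∪ T.filter (fun t => (true :: u) <:+ t) = T ∧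
      Disjoint (T.filter (fun t => (false :: u) <:+ t))
        (T.filter (fun t => (true :: u) <:+ t)) := by
  constructor
  · ext t
    simp only [Finset.mem_union, Finset.mem_filter]
    constructor
    · rintro (⟨h, -⟩ | ⟨h, -⟩) <;> exact h
    · intro ht
      obtain ⟨b, hb⟩ := exists_cons_suffix (hT t ht) (by rintro rfl; exact hu ht)
      cases b
      · exact Or.inl ⟨ht, hb⟩
      · exact Or.inr ⟨ht, hb⟩
  · rw [Finset.disjoint_left]
    intro t ht₁ ht₂
    rw [Finset.mem_filter] at ht₁ ht₂
    have := suffix_eq_of_length ht₁.2 ht₂.2 rfl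
    simp at this

lemma kraft_le : ∀ (n : ℕ) (u : List Bool) (T : Finset (List Bool)),
    (∀ t ∈ T, u <:+ t ∧ t.length ≤ u.length + n) →
    (∀ t₁ ∈ T, ∀ t₂ ∈ T, t₁ ≠ t₂ → ¬ t₁ <:+ t₂) →
    ∑ t ∈ T, (2 : ℝ) ^ (-((t.length : ℤ) - (u.length : ℤ))) ≤ 1 := by
  intro n
  induction n with
  | zero =>
    intro u T hT hfree
    have hsub : T ⊆ {u} := by
      intro t ht
      have h1 := (hT t ht).1
      have h2 := (hT t ht).2
      have h3 := h1.length_le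
      rw [Finset.mem_singleton]
      exact (h1.eq_of_length (by omega)).symm
    refine le_trans (Finset.sum_le_sum_of_subset_of_nonneg hsub ?_) ?_
    · intro t _ _; positivity
    · simp
  | succ n ih =>
    intro u T hT hfree
    by_cases hu : u ∈ T
    · have hTeq : T = {u} := by
        ext t
        rw [Finset.mem_singleton]
        constructor
        · intro ht
          by_contra hne
          exact hfree u hu t ht (fun h => hne h.symm) (hT t ht).1
        · rintro rfl; exact hu
      rw [hTeq]; simp
    · obtain ⟨hunion, hdisj⟩ := tree_split (fun t ht => (hT t ht).1) hu
      have hlen : ∀ (b : Bool) (t : List Bool), t ∈ T.filter (fun t => (b :: u) <:+ t) →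
          (b :: u) <:+ t ∧ t.length ≤ (b :: u).length + n := by
        intro b t ht
        rw [Finset.mem_filter] at ht
        refine ⟨ht.2, ?_⟩
        have := (hT t ht.1).2
        simp only [List.length_cons]
        omega
      have hfree' : ∀ (b : Bool), ∀ t₁ ∈ T.filter (fun t => (b :: u) <:+ t),
          ∀ t₂ ∈ T.filter (fun t => (b :: u) <:+ t), t₁ ≠ t₂ → ¬ t₁ <:+ t₂ := by
        intro b t₁ h₁ t₂ h₂
        exact hfree t₁ (Finset.filter_subset _ _ h₁) t₂ (Finset.filter_subset _ _ h₂)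
      have h₀ := ih (false :: u) _ (hlen false) (hfree' false)
      have h₁ := ih (true :: u) _ (hlen true) (hfree' true)
      rw [← hunion, Finset.sum_union hdisj,
        kraft_half false (fun t ht => (Finset.mem_filter.1 ht).2),
        kraft_half true (fun t ht => (Finset.mem_filter.1 ht).2)]
      simp only [List.length_cons] at h₀ h₁ ⊢
      linarith

/-- The nodes of the tree `T` rooted at `u`. -/
def nodes (D : ℕ) (u : List Bool) (T : Finset (List Bool)) : Set (List Bool) :=
  {v : List Bool | u <:+ v ∧ v.length < D ∧ (v ∈ T ∨ ∃ t ∈ T, v ≠ t ∧ v <:+ t)}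

lemma treeCost_eq (D : ℕ) (l : List Bool → ℝ) (u : List Bool) (T : Finset (List Bool)) :
    treeCost D l u T = (∑ t ∈ T, l t) + ((nodes D u T).ncard : ℝ) := rfl

lemma nodes_finite (D : ℕ) (u : List Bool) (T : Finset (List Bool)) :
    (nodes D u T).Finite := by
  apply Set.Finite.subset (T.biUnion fun t => t.tails.toFinset).finite_toSet
  rintro v ⟨-, -, hv⟩
  simp only [Finset.coe_biUnion, Set.mem_iUnion, Finset.mem_coe, List.mem_toFinset,
    List.mem_tails]
  rcases hv with h | ⟨t, ht, -, hvt⟩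
  · exact ⟨v, h, List.suffix_refl v⟩
  · exact ⟨t, ht, hvt⟩

lemma nodes_split (D : ℕ) (u : List Bool) (T : Finset (List Bool))
    (hD : u.length < D) (hT : ∀ t ∈ T, u <:+ t) (hu : u ∉ T) (hne : T.Nonempty) :
    nodes D u T =
      insert u (nodes D (false :: u) (T.filter (fun t => (false :: u) <:+ t)) ∪
        nodes D (true :: u) (T.filter (fun t => (true :: u) <:+ t))) := by
  ext v
  constructor
  · rintro ⟨hsuf, hlen, hmem⟩
    rcases eq_or_ne v u with rfl | hvu
    · exact Set.mem_insert _ _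
    · have key : ∀ b : Bool, (b :: u) <:+ v →
          v ∈ nodes D (b :: u) (T.filter (fun t => (b :: u) <:+ t)) := by
        intro b hb
        refine ⟨hb, hlen, ?_⟩
        rcases hmem with hvT | ⟨t, ht, hvt, hvsuf⟩
        · exact Or.inl (Finset.mem_filter.2 ⟨hvT, hb⟩)
        · exact Or.inr ⟨t, Finset.mem_filter.2 ⟨ht, hb.trans hvsuf⟩, hvt, hvsuf⟩
      obtain ⟨b, hb⟩ := exists_cons_suffix hsuf hvu
      cases b
      · exact Set.mem_insert_of_mem _ (Or.inl (key false hb))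
      · exact Set.mem_insert_of_mem _ (Or.inr (key true hb))
  · intro hv
    rcases hv with rfl | hv
    · refine ⟨List.suffix_refl v, hD, ?_⟩
      obtain ⟨t, ht⟩ := hne
      exact Or.inr ⟨t, ht, (by rintro rfl; exact hu ht), hT t ht⟩
    · have key : ∀ b : Bool,
          v ∈ nodes D (b :: u) (T.filter (fun t => (b :: u) <:+ t)) → v ∈ nodes D u T := by
        rintro b ⟨hsuf, hlen, hmem⟩
        refine ⟨(List.suffix_cons b u).trans hsuf, hlen, ?_⟩
        rcases hmem with h | ⟨t, ht, h1, h2⟩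
        · exact Or.inl (Finset.mem_filter.1 h).1
        · exact Or.inr ⟨t, (Finset.mem_filter.1 ht).1, h1, h2⟩
      rcases hv with h | h
      · exact key false h
      · exact key true h

lemma notMem_nodes_cons (D : ℕ) (u : List Bool) (b : Bool) (T : Finset (List Bool)) :
    u ∉ nodes D (b :: u) T := by
  rintro ⟨hsuf, -, -⟩
  have := hsuf.length_le
  simp at this

lemma nodes_cons_disjoint (D : ℕ) (u : List Bool) (T₀ T₁ : Finset (List Bool)) :
    Disjoint (nodes D (false :: u) T₀) (nodes D (true :: u) T₁) := by
  rw [Set.disjoint_left]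
  rintro v ⟨h₀, -, -⟩ ⟨h₁, -, -⟩
  have := suffix_eq_of_length h₀ h₁ rfl
  simp at this

lemma ncard_nodes_split (D : ℕ) (u : List Bool) (T : Finset (List Bool))
    (hD : u.length < D) (hT : ∀ t ∈ T, u <:+ t) (hu : u ∉ T) (hne : T.Nonempty) :
    (nodes D u T).ncard =
      1 + (nodes D (false :: u) (T.filter (fun t => (false :: u) <:+ t))).ncard +
        (nodes D (true :: u) (T.filter (fun t => (true :: u) <:+ t))).ncard := by
  have hf := nodes_finite D (false :: u) (T.filter (fun t => (false :: u) <:+ t))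
  have ht := nodes_finite D (true :: u) (T.filter (fun t => (true :: u) <:+ t))
  rw [nodes_split D u T hD hT hu hne,
    Set.ncard_insert_of_notMem (by
      rintro (h | h)
      · exact notMem_nodes_cons D u false _ h
      · exact notMem_nodes_cons D u true _ h) (hf.union ht),
    Set.ncard_union_eq (nodes_cons_disjoint D u _ _) hf ht]
  omega

lemma treeCost_split (D : ℕ) (l : List Bool → ℝ) (u : List Bool) (T : Finset (List Bool))
    (hD : u.length < D) (hT : ∀ t ∈ T, u <:+ t) (hu : u ∉ T) (hne : T.Nonempty) :
    treeCost D l u T =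
      1 + treeCost D l (false :: u) (T.filter (fun t => (false :: u) <:+ t)) +
        treeCost D l (true :: u) (T.filter (fun t => (true :: u) <:+ t)) := by
  obtain ⟨hunion, hdisj⟩ := tree_split hT hu
  have hsum : ∑ t ∈ T, l t =
      (∑ t ∈ T.filter (fun t => (false :: u) <:+ t), l t) +
        ∑ t ∈ T.filter (fun t => (true :: u) <:+ t), l t := by
    rw [← Finset.sum_union hdisj, hunion]
  rw [treeCost_eq, treeCost_eq, treeCost_eq, hsum, ncard_nodes_split D u T hD hT hu hne]
  push_cast
  ring

lemma tree_nonempty {D : ℕ} {u : List Bool} {T : Finset (List Bool)}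
    (h : IsCompleteProperTree D u T) : T.Nonempty := by
  rcases Finset.eq_empty_or_nonempty T with rfl | h'
  · exfalso
    have := h.2.2
    simp at this
  · exact h'

lemma child_trees (D : ℕ) (u : List Bool) (T : Finset (List Bool))
    (h : IsCompleteProperTree D u T) (hu : u ∉ T) (hD : u.length < D) :
    IsCompleteProperTree D (false :: u) (T.filter (fun t => (false :: u) <:+ t)) ∧
      IsCompleteProperTree D (true :: u) (T.filter (fun t => (true :: u) <:+ t)) := by
  obtain ⟨hmem, hfree, hkraft⟩ := h
  obtain ⟨hunion, hdisj⟩ := tree_split (fun t ht => (hmem t ht).1) hu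
  have hmem' : ∀ (b : Bool), ∀ t ∈ T.filter (fun t => (b :: u) <:+ t),
      (b :: u) <:+ t ∧ t.length ≤ D := by
    intro b t ht
    rw [Finset.mem_filter] at ht
    exact ⟨ht.2, (hmem t ht.1).2⟩
  have hfree' : ∀ (b : Bool), ∀ t₁ ∈ T.filter (fun t => (b :: u) <:+ t),
      ∀ t₂ ∈ T.filter (fun t => (b :: u) <:+ t), t₁ ≠ t₂ → ¬ t₁ <:+ t₂ := by
    intro b t₁ h₁ t₂ h₂
    exact hfree t₁ (Finset.filter_subset _ _ h₁) t₂ (Finset.filter_subset _ _ h₂)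
  have hle : ∀ (b : Bool),
      ∑ t ∈ T.filter (fun t => (b :: u) <:+ t),
        (2 : ℝ) ^ (-((t.length : ℤ) - (((b :: u).length : ℕ) : ℤ))) ≤ 1 := by
    intro b
    refine kraft_le (D - (b :: u).length) (b :: u) _ ?_ (hfree' b)
    intro t ht
    refine ⟨(hmem' b t ht).1, ?_⟩
    have h1 := (hmem' b t ht).2
    have h2 := (hmem' b t ht).1.length_le
    simp only [List.length_cons] at *
    omega
  rw [← hunion, Finset.sum_union hdisj,
    kraft_half false (fun t ht => (Finset.mem_filter.1 ht).2),
    kraft_half true (fun t ht => (Finset.mem_filter.1 ht).2)] at hkraft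
  have hle₀ := hle false
  have hle₁ := hle true
  exact ⟨⟨hmem' false, hfree' false, by linarith⟩, ⟨hmem' true, hfree' true, by linarith⟩⟩

lemma singleton_tree (D : ℕ) (u : List Bool) (hu : u.length ≤ D) :
    IsCompleteProperTree D u {u} := by
  refine ⟨?_, ?_, by simp⟩
  · simp only [Finset.mem_singleton]
    rintro t rfl
    exact ⟨List.suffix_refl t, hu⟩
  · intro t₁ h₁ t₂ h₂ hne
    rw [Finset.mem_singleton] at h₁ h₂
    subst h₁; subst h₂
    exact absurd rfl hne

lemma treeCost_singleton (D : ℕ) (l : List Bool → ℝ) (u : List Bool) :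
    treeCost D l u {u} = l u + (if u.length < D then 1 else 0) := by
  rw [treeCost_eq]
  have hset : nodes D u {u} = if u.length < D then {u} else (∅ : Set (List Bool)) := by
    ext v
    split_ifs with h
    · simp only [Set.mem_singleton_iff]
      constructor
      · rintro ⟨hsuf, hlen, hmem⟩
        rcases hmem with hv | ⟨t, ht, hne, hsuf'⟩
        · exact Finset.mem_singleton.1 hv
        · rw [Finset.mem_singleton] at ht
          subst ht
          exact absurd (hsuf'.eq_of_length (le_antisymm hsuf'.length_le hsuf.length_le)) hne
      · rintro rfl
        exact ⟨List.suffix_refl v, h, Or.inl (Finset.mem_singleton_self v)⟩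
    · simp only [Set.mem_empty_iff_false, iff_false]
      rintro ⟨hsuf, hlen, -⟩
      exact h (lt_of_le_of_lt hsuf.length_le hlen)
  rw [hset]
  split_ifs with h <;> simp

lemma union_tree (D : ℕ) (l : List Bool → ℝ) (u : List Bool) (hD : u.length < D)
    {T₀ T₁ : Finset (List Bool)}
    (h₀ : IsCompleteProperTree D (false :: u) T₀)
    (h₁ : IsCompleteProperTree D (true :: u) T₁) :
    IsCompleteProperTree D u (T₀ ∪ T₁) ∧
      treeCost D l u (T₀ ∪ T₁) =
        1 + treeCost D l (false :: u) T₀ + treeCost D l (true :: u) T₁ := by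
  obtain ⟨hm₀, hf₀, hk₀⟩ := h₀
  obtain ⟨hm₁, hf₁, hk₁⟩ := h₁
  have hdisj : Disjoint T₀ T₁ := by
    rw [Finset.disjoint_left]
    intro t ht₀ ht₁
    have := suffix_eq_of_length (hm₀ t ht₀).1 (hm₁ t ht₁).1 rfl
    simp at this
  have hmem : ∀ t ∈ T₀ ∪ T₁, u <:+ t ∧ t.length ≤ D := by
    intro t ht
    rcases Finset.mem_union.1 ht with h | h
    · exact ⟨(List.suffix_cons false u).trans (hm₀ t h).1, (hm₀ t h).2⟩
    · exact ⟨(List.suffix_cons true u).trans (hm₁ t h).1, (hm₁ t h).2⟩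
  have hfree : ∀ t₁ ∈ T₀ ∪ T₁, ∀ t₂ ∈ T₀ ∪ T₁, t₁ ≠ t₂ → ¬ t₁ <:+ t₂ := by
    intro t₁ h₁' t₂ h₂' hne hsuf
    rcases Finset.mem_union.1 h₁' with ha | ha <;> rcases Finset.mem_union.1 h₂' with hb | hb
    · exact hf₀ t₁ ha t₂ hb hne hsuf
    · have := suffix_eq_of_length ((hm₀ t₁ ha).1.trans hsuf) (hm₁ t₂ hb).1 rfl
      simp at this
    · have := suffix_eq_of_length ((hm₁ t₁ ha).1.trans hsuf) (hm₀ t₂ hb).1 rfl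
      simp at this
    · exact hf₁ t₁ ha t₂ hb hne hsuf
  have hkraft : ∑ t ∈ T₀ ∪ T₁, (2 : ℝ) ^ (-((t.length : ℤ) - (u.length : ℤ))) = 1 := by
    rw [Finset.sum_union hdisj, kraft_half false (fun t ht => (hm₀ t ht).1),
      kraft_half true (fun t ht => (hm₁ t ht).1), hk₀, hk₁]
    norm_num
  refine ⟨⟨hmem, hfree, hkraft⟩, ?_⟩
  have hune : u ∉ T₀ ∪ T₁ := by
    intro h
    rcases Finset.mem_union.1 h with h' | h'
    · have := (hm₀ u h').1.length_le; simp at this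
    · have := (hm₁ u h').1.length_le; simp at this
  have hne : (T₀ ∪ T₁).Nonempty := by
    obtain ⟨t, ht⟩ := tree_nonempty (⟨hm₀, hf₀, hk₀⟩ : IsCompleteProperTree D (false :: u) T₀)
    exact ⟨t, Finset.mem_union_left _ ht⟩
  have hfilter : ∀ b : Bool, ∀ S₀ S₁ : Finset (List Bool),
      (∀ t ∈ S₀, (b :: u) <:+ t) → (∀ t ∈ S₁, ((!b) :: u) <:+ t) →
      (S₀ ∪ S₁).filter (fun t => (b :: u) <:+ t) = S₀ := by
    intro b S₀ S₁ hS₀ hS₁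
    ext t
    simp only [Finset.mem_filter, Finset.mem_union]
    constructor
    · rintro ⟨h | h, hsuf⟩
      · exact h
      · have := suffix_eq_of_length hsuf (hS₁ t h) rfl
        simp at this
    · intro h; exact ⟨Or.inl h, hS₀ t h⟩
  have hfilter₀ : (T₀ ∪ T₁).filter (fun t => (false :: u) <:+ t) = T₀ :=
    hfilter false T₀ T₁ (fun t ht => (hm₀ t ht).1) (fun t ht => (hm₁ t ht).1)
  have hfilter₁ : (T₀ ∪ T₁).filter (fun t => (true :: u) <:+ t) = T₁ := by
    rw [Finset.union_comm]
    exact hfilter true T₁ T₀ (fun t ht => (hm₁ t ht).1) (fun t ht => (hm₀ t ht).1)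
  rw [treeCost_split D l u (T₀ ∪ T₁) hD (fun t ht => (hmem t ht).1) hune hne,
    hfilter₀, hfilter₁]

lemma isLeast_of_length_eq (D : ℕ) (l : List Bool → ℝ) (u : List Bool)
    (hud : u.length = D) :
    IsLeast {r : ℝ | ∃ T : Finset (List Bool),
        IsCompleteProperTree D u T ∧ treeCost D l u T = r}
      (mdlCost D l u) := by
  have hmdl : mdlCost D l u = l u := by
    rw [mdlCost, if_pos hud.ge]
  constructor
  · refine ⟨{u}, singleton_tree D u hud.le, ?_⟩
    rw [treeCost_singleton, hmdl, if_neg (by omega)]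
    ring
  · rintro r ⟨T, hT, rfl⟩
    have hTeq : T = {u} := by
      have hne := tree_nonempty hT
      have hsub : ∀ t ∈ T, t = u := by
        intro t ht
        have h1 := (hT.1 t ht).1
        have h2 := (hT.1 t ht).2
        have h3 := h1.length_le
        exact (h1.eq_of_length (by omega)).symm
      obtain ⟨t₀, ht₀⟩ := hne
      ext t
      rw [Finset.mem_singleton]
      constructor
      · exact hsub t
      · rintro rfl
        rw [← hsub t₀ ht₀]
        exact ht₀
    rw [hTeq, treeCost_singleton, hmdl, if_neg (by omega)]
    simp

lemma main_aux (D : ℕ) (l : List Bool → ℝ) :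
    ∀ (n : ℕ) (u : List Bool), u.length ≤ D → D ≤ u.length + n →
      IsLeast {r : ℝ | ∃ T : Finset (List Bool),
          IsCompleteProperTree D u T ∧ treeCost D l u T = r}
        (mdlCost D l u) := by
  intro n
  induction n with
  | zero =>
    intro u hu hn
    exact isLeast_of_length_eq D l u (by omega)
  | succ n ih =>
    intro u hu hn
    rcases eq_or_lt_of_le hu with hud | hud
    · exact isLeast_of_length_eq D l u hud
    · have ih₀ := ih (false :: u) (by simp only [List.length_cons]; omega)
        (by simp only [List.length_cons]; omega)
      have ih₁ := ih (true :: u) (by simp only [List.length_cons]; omega)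
        (by simp only [List.length_cons]; omega)
      have hmdl : mdlCost D l u =
          1 + min (l u) (mdlCost D l (false :: u) + mdlCost D l (true :: u)) := by
        rw [mdlCost, if_neg (by omega)]
      constructor
      · rcases le_total (l u) (mdlCost D l (false :: u) + mdlCost D l (true :: u)) with hc | hc
        · refine ⟨{u}, singleton_tree D u hu, ?_⟩
          rw [treeCost_singleton, hmdl, min_eq_left hc, if_pos hud]
          ring
        · obtain ⟨T₀, hT₀, hc₀⟩ := ih₀.1
          obtain ⟨T₁, hT₁, hc₁⟩ := ih₁.1
          obtain ⟨htree, hcost⟩ := union_tree D l u hud hT₀ hT₁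
          exact ⟨T₀ ∪ T₁, htree, by rw [hcost, hc₀, hc₁, hmdl, min_eq_right hc]; ring⟩
      · rintro r ⟨T, hT, rfl⟩
        by_cases huT : u ∈ T
        · have hTeq : T = {u} := by
            ext t
            rw [Finset.mem_singleton]
            constructor
            · intro ht
              by_contra hne
              exact hT.2.1 u huT t ht (fun h => hne h.symm) (hT.1 t ht).1
            · rintro rfl; exact huT
          rw [hTeq, treeCost_singleton, hmdl, if_pos hud]
          have := min_le_left (l u) (mdlCost D l (false :: u) + mdlCost D l (true :: u))
          linarith
        · obtain ⟨hc₀', hc₁'⟩ := child_trees D u T hT huT hud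
          have hne := tree_nonempty hT
          rw [treeCost_split D l u T hud (fun t ht => (hT.1 t ht).1) huT hne]
          have lb₀ := ih₀.2 ⟨_, hc₀', rfl⟩
          have lb₁ := ih₁.2 ⟨_, hc₁', rfl⟩
          rw [hmdl]
          have := min_le_right (l u) (mdlCost D l (false :: u) + mdlCost D l (true :: u))
          linarith

end CTPAux

/-- Context tree pruning computes the MDL tree source structure: for every
string `u` of length at most `D`, the recursion `mdlCost` equals the minimum of
`treeCost` over all complete proper trees rooted at `u`. -/
theorem mdlCost_isLeast_treeCost (D : ℕ) (l : List Bool → ℝ)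
    (u : List Bool) (hu : u.length ≤ D) :
    IsLeast {r : ℝ | ∃ T : Finset (List Bool),
        IsCompleteProperTree D u T ∧ treeCost D l u T = r}
      (mdlCost D l u) := by
  exact CTPAux.main_aux D l D u hu (by omega)
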